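/- arXiv:2501.12062 — 4 statements merged into one kernel-verified Lean document; each statement's English description precedes it below -/
import Mathlib

section
/- If G is a graph with chromatic number greater than n, then the categorical (tensor) product of G with the complete graph K_{n+1} also has chromatic number greater than n. -/
/-- The categorical (tensor) product of two simple graphs. -/
def tensorProd {α β : Type*} (G : SimpleGraph α) (H : SimpleGraph β) :
    SimpleGraph (α × β) where
  Adj x y := G.Adj x.1 y.1 ∧ H.Adj x.2 y.2
  symm := ⟨fun _ _ h => ⟨h.1.symm, h.2.symm⟩⟩
  loopless := ⟨fun x h => G.loopless.irrefl x.1 h.1⟩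

/-- If χ(G) > n then χ(G × K_{n+1}) > n. -/
theorem stmt0 {α : Type*} (G : SimpleGraph α) (n : ℕ)
    (h : (n : ℕ∞) < G.chromaticNumber) :
    (n : ℕ∞) < (tensorProd G (SimpleGraph.completeGraph (Fin (n + 1)))).chromaticNumber := by
  rw [← not_le] at h ⊢
  refine fun hle => h ?_
  rw [SimpleGraph.chromaticNumber_le_iff_colorable] at hle ⊢
  obtain ⟨C⟩ := hle
  have key : ∀ u : α, ∃ i j : Fin (n + 1), i ≠ j ∧ C (u, i) = C (u, j) :=
    fun u => Fintype.exists_ne_map_eq_of_card_lt (fun i : Fin (n + 1) => C (u, i))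
      (by simp)
  choose i j hij he using key
  refine ⟨SimpleGraph.Coloring.mk (fun u => C (u, i u)) ?_⟩
  intro u v huv hc
  by_cases hiv : i u = i v
  · have hadj : (tensorProd G (SimpleGraph.completeGraph (Fin (n + 1)))).Adj (u, i u) (v, j v) :=
      ⟨huv, by simpa [SimpleGraph.completeGraph] using hiv ▸ hij v⟩
    exact C.valid hadj (hc.trans (he v))
  · have hadj : (tensorProd G (SimpleGraph.completeGraph (Fin (n + 1)))).Adj (u, i u) (v, i v) :=
      ⟨huv, hiv⟩
    exact C.valid hadj hc
end

section
/- There is a graph homomorphism from the exponential graph K_n^{K_{n+1}} to K_n, obtained by mapping each function f : [n+1] → [n] to an arbitrary value that f attains at least twice (such a value exists by the pigeonhole principle). -/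
/-- The exponential graph `K_n^{K_{n+1}}`: vertices are functions
`Fin (n+1) → Fin n`, with `f` adjacent to `g` iff `f i ≠ g j` for all `i ≠ j`. -/
def expGraph (n : ℕ) : SimpleGraph (Fin (n + 1) → Fin n) where
  Adj f g := ∀ i j, i ≠ j → f i ≠ g j
  symm := ⟨fun _ _ h i j hij => Ne.symm (h j i (Ne.symm hij))⟩
  loopless := ⟨fun f h => by
    have hinj : Function.Injective f := by
      intro i j hf
      by_contra hne
      exact h i j hne hf
    have := Fintype.card_le_of_injective f hinj
    simp [Fintype.card_fin] at this⟩

/-- There is a graph homomorphism from `K_n^{K_{n+1}}` to `K_n` mapping every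
function `f : Fin (n+1) → Fin n` to a value that `f` attains at least twice. -/
theorem stmt1 (n : ℕ) :
    ∃ h : expGraph n →g SimpleGraph.completeGraph (Fin n),
      ∀ f : Fin (n + 1) → Fin n, ∃ i j, i ≠ j ∧ f i = f j ∧ h f = f i := by
  have key : ∀ f : Fin (n + 1) → Fin n,
      ∃ p : Fin (n + 1) × Fin (n + 1), p.1 ≠ p.2 ∧ f p.1 = f p.2 := by
    intro f
    obtain ⟨i, j, hij, hf⟩ := Fintype.exists_ne_map_eq_of_card_lt f (by simp)
    exact ⟨(i, j), hij, hf⟩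
  choose p hp hfp using key
  refine ⟨⟨fun f => f (p f).1, ?_⟩, fun f => ⟨(p f).1, (p f).2, hp f, hfp f, rfl⟩⟩
  intro f g hadj
  show f (p f).1 ≠ g (p g).1
  by_cases hc : (p f).1 = (p g).1
  · rw [hfp f]
    exact hadj (p f).2 (p g).1 (fun h => hp f (h ▸ hc.symm ▸ rfl))
  · exact hadj (p f).1 (p g).1 hc
end

section
/- Let ℓ ≥ 3, r ≥ 4, and let f : {0,1,2}^n → [ℓ] be a polymorphism of (LO^r_3, CF^r_ℓ). If S, T ⊆ [n] are disjoint sets with f(2·1_S) = f(2·1_T), then X = [n] \ (S ∪ T) is a {f(0⃗)}-avoiding set: for every Y with X ⊆ Y ⊆ [n], f(1_Y) ≠ f(0⃗), where 0⃗ is the all-zeros vector. -/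
/-- A tuple has a uniquely-occurring entry. -/
def hasUniqueEntry {r k : ℕ} (x : Fin r → Fin k) : Prop :=
  ∃ i, ∀ j, j ≠ i → x j ≠ x i

/-- A tuple has a unique maximum entry. -/
def hasUniqueMax {r k : ℕ} (x : Fin r → Fin k) : Prop :=
  ∃ i, ∀ j, j ≠ i → x j < x i

/-- `f` is an `n`-ary polymorphism of `(LO^r_3, CF^r_l)`. -/
def IsLOCFPoly (r n l : ℕ) (f : (Fin n → Fin 3) → Fin l) : Prop :=
  ∀ M : Fin r → Fin n → Fin 3,
    (∀ c, hasUniqueMax fun i => M i c) → hasUniqueEntry fun i => f (M i)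

/-- Let `l ≥ 3`, `r ≥ 4`, `f` a polymorphism of `(LO^r_3, CF^r_l)`. If `S, T` are
disjoint with `f(2·1_S) = f(2·1_T)`, then `X = [n] \ (S ∪ T)` is `{f(0)}`-avoiding:
for every `Y ⊇ X`, `f(1_Y) ≠ f(0)`. -/
theorem stmt8 (l r n : ℕ) (hl : 3 ≤ l) (hr : 4 ≤ r)
    (f : (Fin n → Fin 3) → Fin l) (hf : IsLOCFPoly r n l f)
    (S T : Finset (Fin n)) (hST : Disjoint S T)
    (h : f (fun i => if i ∈ S then 2 else 0) = f (fun i => if i ∈ T then 2 else 0)) :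
    ∀ Y : Finset (Fin n), Finset.univ \ (S ∪ T) ⊆ Y →
      f (fun i => if i ∈ Y then 1 else 0) ≠ f (fun _ => 0) := by
  intro Y hY hc
  have hM : ∃ M : Fin r → Fin n → Fin 3, ∀ i c, M i c =
      if i.val = 0 then (if c ∈ S then 2 else 0)
      else if i.val = 1 then (if c ∈ T then 2 else 0)
      else if i.val = 2 then (if c ∈ Y then 1 else 0)
      else 0 := ⟨_, fun _ _ => rfl⟩
  obtain ⟨M, hMdef⟩ := hM
  have hcol : ∀ c, hasUniqueMax fun i => M i c := by
    intro c
    by_cases hcS : c ∈ S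
    · refine ⟨⟨0, by omega⟩, fun j hj => ?_⟩
      have hjv : j.val ≠ 0 := fun hv => hj (Fin.ext hv)
      have hcT : c ∉ T := fun hT => (Finset.disjoint_left.mp hST hcS) hT
      simp only [hMdef]
      simp only [if_pos rfl, if_pos hcS, if_neg hjv]
      split_ifs <;> first | decide | exact (‹False›).elim | exact absurd ‹c ∈ T› hcT
    · by_cases hcT : c ∈ T
      · refine ⟨⟨1, by omega⟩, fun j hj => ?_⟩
        have hjv : j.val ≠ 1 := fun hv => hj (Fin.ext hv)
        simp only [hMdef]
        simp only [Nat.one_ne_zero, if_neg, if_pos rfl, if_pos hcT, if_neg hjv]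
        split_ifs <;> first | decide | exact (‹False›).elim | exact absurd ‹c ∈ S› hcS
      · have hcY : c ∈ Y := hY (by simp [hcS, hcT])
        refine ⟨⟨2, by omega⟩, fun j hj => ?_⟩
        have hjv : j.val ≠ 2 := fun hv => hj (Fin.ext hv)
        simp only [hMdef]
        simp only [show (2:ℕ) ≠ 0 by decide, show (2:ℕ) ≠ 1 by decide, if_neg,
          if_pos rfl, if_pos hcY, if_neg hjv]
        split_ifs <;> first | decide | exact (‹False›).elim | exact absurd ‹c ∈ S› hcS | exact absurd ‹c ∈ T› hcT
  obtain ⟨i, hi⟩ := hf M hcol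
  have e0 : f (M ⟨0, by omega⟩) = f (fun c => if c ∈ S then 2 else 0) := by
    congr 1; funext c; rw [hMdef]; simp
  have e1 : f (M ⟨1, by omega⟩) = f (fun c => if c ∈ S then 2 else 0) := by
    rw [h]; congr 1; funext c; rw [hMdef]; simp
  have e2 : f (M ⟨2, by omega⟩) = f (fun _ => (0 : Fin 3)) := by
    rw [← hc]; congr 1; funext c; rw [hMdef]; simp
  have e3 : ∀ (j : Fin r), 3 ≤ j.val → f (M j) = f (fun _ => (0 : Fin 3)) := by
    intro j hj
    congr 1; funext c
    rw [hMdef, if_neg (by omega), if_neg (by omega), if_neg (by omega)]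
  have hz : ∀ (j : Fin r), 2 ≤ j.val → f (M j) = f (fun _ => (0 : Fin 3)) := by
    intro j hj
    rcases Nat.eq_or_lt_of_le hj with h2 | h3
    · rw [show j = ⟨2, by omega⟩ from Fin.ext h2.symm, e2]
    · exact e3 j h3
  have hi' : ∀ j : Fin r, j ≠ i → f (M j) ≠ f (M i) := hi
  rcases Nat.lt_or_ge i.val 2 with hi2 | hi2
  · have h01 : i.val = 0 ∨ i.val = 1 := by omega
    have eS : f (M i) = f (fun c => if c ∈ S then 2 else 0) := by
      rcases h01 with h0 | h1
      · rw [show i = ⟨0, by omega⟩ from Fin.ext h0]; exact e0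
      · rw [show i = ⟨1, by omega⟩ from Fin.ext h1]; exact e1
    rcases h01 with h0 | h1
    · exact hi' ⟨1, by omega⟩
        (fun he => by have hv : (1 : ℕ) = i.val := congrArg Fin.val he; omega)
        (e1.trans eS.symm)
    · exact hi' ⟨0, by omega⟩
        (fun he => by have hv : (0 : ℕ) = i.val := congrArg Fin.val he; omega)
        (e0.trans eS.symm)
  · have eZ : f (M i) = f (fun _ => (0 : Fin 3)) := hz i hi2
    by_cases h2 : i.val = 2
    · exact hi' ⟨3, by omega⟩
        (fun he => by have hv : (3 : ℕ) = i.val := congrArg Fin.val he; omega)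
        ((hz ⟨3, by omega⟩ (by simp)).trans eZ.symm)
    · exact hi' ⟨2, by omega⟩
        (fun he => by have hv : (2 : ℕ) = i.val := congrArg Fin.val he; omega)
        ((hz ⟨2, by omega⟩ (by simp)).trans eZ.symm)
end

section
/- Deciding whether an instance of the CSP with template CF^4_2 has a solution is equivalent to solvability of a system of linear equations over Z_2: a 4-uniform hypergraph has a conflict-free 2-colouring if and only if the system {x_a + x_b + x_c + x_d ≡ 1 (mod 2) : {a,b,c,d} an edge} has a solution over Z_2. -/
theorem key9 : ∀ g : Fin 4 → ZMod 2,
    (∃ i : Fin 4, ∀ j ≠ i, g j ≠ g i) ↔ g 0 + g 1 + g 2 + g 3 = 1 := by decide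

/-- A 4-uniform hypergraph (edges given as quadruples of vertices) has a
conflict-free 2-colouring iff the corresponding system of linear equations
`x_a + x_b + x_c + x_d = 1` over `Z_2` has a solution. -/
theorem stmt9 {V : Type*} (E : Set (Fin 4 → V)) :
    (∃ c : V → Fin 2, ∀ e ∈ E, ∃ i : Fin 4, ∀ j ≠ i, c (e j) ≠ c (e i)) ↔
    (∃ x : V → ZMod 2, ∀ e ∈ E, x (e 0) + x (e 1) + x (e 2) + x (e 3) = 1) := by
  constructor
  · rintro ⟨c, hc⟩
    exact ⟨fun v => (c v : Fin 2), fun e he => (key9 fun j => c (e j)).1 (hc e he)⟩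
  · rintro ⟨x, hx⟩
    exact ⟨fun v => (x v : ZMod 2), fun e he => (key9 fun j => x (e j)).2 (hx e he)⟩
end
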